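/- arXiv:1802.01751 — 2 statements merged into one kernel-verified Lean document; each statement's English description precedes it below -/
import Mathlib

section
/- Let H be a real inner product space, P and Q finite nonempty families of vectors in H with means μ_P and μ_Q. If for every p ∈ P, |⟪μ_P, p⟫ − ⟪μ_Q, p⟫| ≤ ε and for every q ∈ Q, |⟪μ_P, q⟫ − ⟪μ_Q, q⟫| ≤ ε, then ‖μ_P − μ_Q‖² ≤ 2ε. -/
open scoped RealInnerProductSpace

theorem stmt_2 {H : Type*} [NormedAddCommGroup H] [InnerProductSpace ℝ H]
    (m n : ℕ) (hm : 0 < m) (hn : 0 < n)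
    (p : Fin m → H) (q : Fin n → H)
    (μP μQ : H) (ε : ℝ)
    (hP : μP = (m : ℝ)⁻¹ • ∑ i, p i)
    (hQ : μQ = (n : ℝ)⁻¹ • ∑ j, q j)
    (hp : ∀ i, |⟪μP, p i⟫ - ⟪μQ, p i⟫| ≤ ε)
    (hq : ∀ j, |⟪μP, q j⟫ - ⟪μQ, q j⟫| ≤ ε) :
    ‖μP - μQ‖ ^ 2 ≤ 2 * ε := by
  set v := μP - μQ with hv
  have h1 : ⟪v, μP⟫ ≤ ε := by
    rw [hP, real_inner_smul_right, inner_sum]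
    have : ∑ i, ⟪v, p i⟫ ≤ m * ε := by
      calc ∑ i, ⟪v, p i⟫ ≤ ∑ _i : Fin m, ε := by
            refine Finset.sum_le_sum fun i _ => ?_
            have := hp i
            have : ⟪v, p i⟫ = ⟪μP, p i⟫ - ⟪μQ, p i⟫ := by
              simp [hv, inner_sub_left]
            rw [this]
            exact (abs_le.mp (hp i)).2
        _ = m * ε := by simp [mul_comm]
    calc (m : ℝ)⁻¹ * ∑ i, ⟪v, p i⟫ ≤ (m : ℝ)⁻¹ * (m * ε) := by
          apply mul_le_mul_of_nonneg_left this
          positivity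
      _ = ε := by field_simp
  have h2 : -ε ≤ ⟪v, μQ⟫ := by
    rw [hQ, real_inner_smul_right, inner_sum]
    have : -(n * ε) ≤ ∑ j, ⟪v, q j⟫ := by
      calc -(n*ε) = ∑ _j : Fin n, (-ε) := by simp [mul_comm]
        _ ≤ ∑ j, ⟪v, q j⟫ := by
            refine Finset.sum_le_sum fun j _ => ?_
            have : ⟪v, q j⟫ = ⟪μP, q j⟫ - ⟪μQ, q j⟫ := by
              simp [hv, inner_sub_left]
            rw [this]
            exact (abs_le.mp (hq j)).1
    calc -ε = (n : ℝ)⁻¹ * (-(n * ε)) := by field_simp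
      _ ≤ (n : ℝ)⁻¹ * ∑ j, ⟪v, q j⟫ := by
          apply mul_le_mul_of_nonneg_left this
          positivity
  have : ‖v‖ ^ 2 = ⟪v, μP⟫ - ⟪v, μQ⟫ := by
    rw [← real_inner_self_eq_norm_sq]
    rw [hv, inner_sub_right]
  rw [this]
  linarith
end

section
/- Fix d ≥ 1 and z > 0. Let e_1, …, e_d be the standard basis of ℝᵈ and set p_i = √(z/2) · e_i. Let S ⊆ {1,…,d} with |S| = d/2 (d even), let p̄ = (1/d)∑_{i=1}^d p_i, q̄ = (2/d)∑_{i∈S} p_i, and p* = q̄ + √(z/2)·(q̄ − p̄)/‖q̄ − p̄‖. Then ‖p* − p_i‖² = z − z/d for all i ∈ S, and ‖p* − p_j‖² = z + z/d + 2z/√d for all j ∉ S. -/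
theorem stmt_12 {d : ℕ} (hd : 0 < d) (z : ℝ) (hz : 0 < z)
    (p : Fin d → EuclideanSpace ℝ (Fin d))
    (hp : ∀ i, p i = EuclideanSpace.single i (Real.sqrt (z / 2)))
    (S : Finset (Fin d)) (hS : 2 * S.card = d)
    (pbar qbar pstar : EuclideanSpace ℝ (Fin d))
    (hpbar : pbar = (d : ℝ)⁻¹ • ∑ i, p i)
    (hqbar : qbar = (2 / (d : ℝ)) • ∑ i ∈ S, p i)
    (hpstar : pstar = qbar + (Real.sqrt (z / 2) / ‖qbar - pbar‖) • (qbar - pbar)) :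
    (∀ i ∈ S, ‖pstar - p i‖ ^ 2 = z - z / d) ∧
      (∀ j ∉ S, ‖pstar - p j‖ ^ 2 = z + z / d + 2 * z / Real.sqrt d) := by
  set a : ℝ := Real.sqrt (z / 2) with ha
  have apos : 0 < a := Real.sqrt_pos.mpr (by linarith)
  have ha2 : a ^ 2 = z / 2 := Real.sq_sqrt (by linarith)
  have hdR : (0:ℝ) < (d:ℝ) := by exact_mod_cast hd
  set r : ℝ := Real.sqrt d with hr
  have rpos : 0 < r := Real.sqrt_pos.mpr hdR
  have hr2 : r ^ 2 = (d:ℝ) := Real.sq_sqrt hdR.le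
  -- coordinates of p j
  have hpk : ∀ j k, p j k = if k = j then a else 0 := by
    intro j k
    rw [hp j, EuclideanSpace.single_apply]
  -- coordinates of pbar
  have hpbark : ∀ k, pbar k = a / d := by
    intro k
    rw [hpbar]
    have : (∑ i, p i) k = ∑ i, p i k := by rw [WithLp.ofLp_sum, Finset.sum_apply]
    simp only [PiLp.smul_apply, this, hpk, smul_eq_mul]
    rw [Finset.sum_ite_eq Finset.univ k fun _ => a]
    simp [div_eq_inv_mul]
  -- coordinates of qbar
  have hqbark : ∀ k, qbar k = if k ∈ S then 2 * a / d else 0 := by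
    intro k
    rw [hqbar]
    have : (∑ i ∈ S, p i) k = ∑ i ∈ S, p i k := by rw [WithLp.ofLp_sum, Finset.sum_apply]
    simp only [PiLp.smul_apply, this, hpk, smul_eq_mul]
    rw [Finset.sum_ite_eq S k fun _ => a]
    by_cases h : k ∈ S <;> simp [h] <;> ring
  have hdiffk : ∀ k, (qbar - pbar) k = if k ∈ S then a / d else -(a / d) := by
    intro k
    rw [PiLp.sub_apply, hqbark, hpbark]
    by_cases h : k ∈ S <;> simp [h] <;> ring
  -- norm of qbar - pbar
  have hcard : (S.card : ℝ) = (d:ℝ) / 2 := by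
    have : ((2 * S.card : ℕ) : ℝ) = (d : ℝ) := by exact_mod_cast congrArg (Nat.cast (R := ℝ)) hS
    push_cast at this
    linarith
  have hcardc : ((Sᶜ).card : ℝ) = (d:ℝ) / 2 := by
    have := Finset.card_compl S
    have h2 : S.card ≤ d := by omega
    have : ((Sᶜ).card : ℝ) = (d : ℝ) - S.card := by
      rw [this]; simp [Fintype.card_fin]
      push_cast [Nat.cast_sub h2]; ring
    rw [this, hcard]; ring
  have hnorm : ‖qbar - pbar‖ = a / r := by
    rw [EuclideanSpace.norm_eq]
    have : ∀ k, ‖(qbar - pbar) k‖ ^ 2 = (a / d) ^ 2 := by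
      intro k
      rw [hdiffk k]
      by_cases h : k ∈ S <;> simp [h, Real.norm_eq_abs, sq_abs, abs_of_pos apos]
    rw [Finset.sum_congr rfl fun k _ => this k, Finset.sum_const]
    simp only [Finset.card_univ, Fintype.card_fin, nsmul_eq_mul]
    rw [show (d:ℝ) * (a / d) ^ 2 = (a / r)^2 by
      rw [div_pow, div_pow, hr2]; field_simp]
    exact Real.sqrt_sq (by positivity)
  -- coordinates of pstar
  have hcoef : a / ‖qbar - pbar‖ = r := by
    rw [hnorm]; field_simp
  have hpstark : ∀ k, pstar k = if k ∈ S then 2 * a / d + r * (a / d) else -(r * (a / d)) := by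
    intro k
    rw [hpstar]
    rw [PiLp.add_apply, PiLp.smul_apply, hqbark, hdiffk, smul_eq_mul, hcoef]
    by_cases h : k ∈ S <;> simp [h] <;> ring
  have key : ∀ (i : Fin d), ‖pstar - p i‖ ^ 2 =
      ∑ k, (pstar k - p i k) ^ 2 := by
    intro i
    rw [EuclideanSpace.norm_eq, Real.sq_sqrt (by positivity)]
    refine Finset.sum_congr rfl fun k _ => ?_
    rw [PiLp.sub_apply, Real.norm_eq_abs, sq_abs]
  set c1 : ℝ := 2 * a / d + r * (a / d) with hc1
  set c2 : ℝ := r * (a / d) with hc2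
  constructor
  · intro i hi
    rw [key i]
    have hsum : ∑ k, (pstar k - p i k) ^ 2 =
        (c1 - a) ^ 2 + ((S.card : ℝ) - 1) * c1 ^ 2 + ((Sᶜ).card : ℝ) * c2 ^ 2 := by
      rw [← Finset.sum_add_sum_compl S]
      have h1 : ∑ k ∈ S, (pstar k - p i k) ^ 2 =
          (c1 - a) ^ 2 + ((S.card : ℝ) - 1) * c1 ^ 2 := by
        rw [← Finset.add_sum_erase S _ hi]
        have e1 : (pstar i - p i i) ^ 2 = (c1 - a) ^ 2 := by
          rw [hpstark, hpk]; simp [hi]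
        rw [e1]
        have e2 : ∀ k ∈ S.erase i, (pstar k - p i k) ^ 2 = c1 ^ 2 := by
          intro k hk
          have hkS : k ∈ S := Finset.mem_of_mem_erase hk
          have hki : k ≠ i := Finset.ne_of_mem_erase hk
          rw [hpstark, hpk]; simp [hkS, hki]
        rw [Finset.sum_congr rfl e2, Finset.sum_const, Finset.card_erase_of_mem hi,
          nsmul_eq_mul]
        have : S.card ≠ 0 := by omega
        push_cast [Nat.cast_sub (Nat.one_le_iff_ne_zero.mpr this)]
        ring
      have h2 : ∑ k ∈ Sᶜ, (pstar k - p i k) ^ 2 = ((Sᶜ).card : ℝ) * c2 ^ 2 := by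
        have e2 : ∀ k ∈ Sᶜ, (pstar k - p i k) ^ 2 = c2 ^ 2 := by
          intro k hk
          have hkS : k ∉ S := Finset.mem_compl.mp hk
          have hki : k ≠ i := fun h => hkS (h ▸ hi)
          rw [hpstark, hpk]; simp [hkS, hki]
        rw [Finset.sum_congr rfl e2, Finset.sum_const, nsmul_eq_mul]
      rw [h1, h2]
    rw [hsum, hcard, hcardc, hc1, hc2]
    have hdr : (d:ℝ) = r ^ 2 := hr2.symm
    have hzz : z = 2 * a ^ 2 := by rw [ha2]; ring
    rw [hdr, hzz]
    have : r ≠ 0 := ne_of_gt rpos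
    field_simp
    ring
  · intro j hj
    rw [key j]
    have hjc : j ∈ Sᶜ := Finset.mem_compl.mpr hj
    have hsum : ∑ k, (pstar k - p j k) ^ 2 =
        ((S.card : ℝ)) * c1 ^ 2 + ((c2 + a) ^ 2 + (((Sᶜ).card : ℝ) - 1) * c2 ^ 2) := by
      rw [← Finset.sum_add_sum_compl S]
      have h1 : ∑ k ∈ S, (pstar k - p j k) ^ 2 = ((S.card : ℝ)) * c1 ^ 2 := by
        have e2 : ∀ k ∈ S, (pstar k - p j k) ^ 2 = c1 ^ 2 := by
          intro k hk
          have hki : k ≠ j := fun h => hj (h ▸ hk)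
          rw [hpstark, hpk]; simp [hk, hki]
        rw [Finset.sum_congr rfl e2, Finset.sum_const, nsmul_eq_mul]
      have h2 : ∑ k ∈ Sᶜ, (pstar k - p j k) ^ 2 =
          (c2 + a) ^ 2 + (((Sᶜ).card : ℝ) - 1) * c2 ^ 2 := by
        rw [← Finset.add_sum_erase Sᶜ _ hjc]
        have e1 : (pstar j - p j j) ^ 2 = (c2 + a) ^ 2 := by
          rw [hpstark, hpk]; simp [hj]; ring
        rw [e1]
        have e2 : ∀ k ∈ Sᶜ.erase j, (pstar k - p j k) ^ 2 = c2 ^ 2 := by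
          intro k hk
          have hkS : k ∉ S := Finset.mem_compl.mp (Finset.mem_of_mem_erase hk)
          have hki : k ≠ j := Finset.ne_of_mem_erase hk
          rw [hpstark, hpk]; simp [hkS, hki]
        rw [Finset.sum_congr rfl e2, Finset.sum_const, Finset.card_erase_of_mem hjc,
          nsmul_eq_mul]
        have hne : (Sᶜ).card ≠ 0 := Finset.card_ne_zero.mpr ⟨j, hjc⟩
        push_cast [Nat.cast_sub (Nat.one_le_iff_ne_zero.mpr hne)]
        ring
      rw [h1, h2]
    rw [hsum, hcard, hcardc, hc1, hc2]
    have hdr : (d:ℝ) = r ^ 2 := hr2.symm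
    have hzz : z = 2 * a ^ 2 := by rw [ha2]; ring
    rw [hdr, hzz]
    have : r ≠ 0 := ne_of_gt rpos
    field_simp
    ring
end
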